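/- Let γ₁ > 1 > γ₂ > 0 and σ₀ > 0. Suppose a sequence (σ_k)_{k=0}^{m} of positive reals satisfies σ_{k+1} ≥ γ₂·σ_k for k in a set S ⊆ {0,…,m−1} and σ_{k+1} ≥ γ₁·σ_k for k ∈ {0,…,m−1} \ S, and σ_k ≤ σ_max for all k ≤ m. Then m ≤ |S|·(1 + |log γ₂|/log γ₁) + (1/log γ₁)·log(σ_max/σ₀). -/
import Mathlib


/-- Bound on the total number of iterations in terms of successful iterations for an
adaptively regularized sequence `σ_k`. -/
theorem total_iterations_bound (γ₁ γ₂ σ₀ σmax : ℝ) (hγ₁ : 1 < γ₁)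
    (hγ₂0 : 0 < γ₂) (hγ₂1 : γ₂ < 1) (hσ₀ : 0 < σ₀) (m : ℕ) (σ : ℕ → ℝ)
    (hσpos : ∀ k ≤ m, 0 < σ k) (hσ0 : σ 0 = σ₀)
    (S : Finset ℕ) (hS : S ⊆ Finset.range m)
    (hsucc : ∀ k < m, k ∈ S → γ₂ * σ k ≤ σ (k + 1))
    (hfail : ∀ k < m, k ∉ S → γ₁ * σ k ≤ σ (k + 1))
    (hmax : ∀ k ≤ m, σ k ≤ σmax) :
    (m : ℝ) ≤ (S.card : ℝ) * (1 + |Real.log γ₂| / Real.log γ₁)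
      + (1 / Real.log γ₁) * Real.log (σmax / σ₀) := by
  have hγ₁0 : 0 < γ₁ := lt_trans one_pos hγ₁
  have hlγ₁ : 0 < Real.log γ₁ := Real.log_pos hγ₁
  have hlγ₂ : Real.log γ₂ < 0 := Real.log_neg hγ₂0 hγ₂1
  have key : ∀ k ≤ m, σ₀ * γ₂ ^ (S ∩ Finset.range k).card *
      γ₁ ^ (k - (S ∩ Finset.range k).card) ≤ σ k := by
    intro k
    induction k with
    | zero => intro _; simp [hσ0]
    | succ k ih =>
      intro hk
      have hk' : k ≤ m := Nat.le_of_succ_le hk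
      have hkm : k < m := hk
      have ihk := ih hk'
      have hcard : (S ∩ Finset.range k).card ≤ k := by
        have := Finset.card_le_card (Finset.inter_subset_right (s₁ := S) (s₂ := Finset.range k))
        simpa using this
      have hpos : 0 < σ₀ * γ₂ ^ (S ∩ Finset.range k).card *
          γ₁ ^ (k - (S ∩ Finset.range k).card) := by positivity
      by_cases hkS : k ∈ S
      · have hT' : S ∩ Finset.range (k + 1) = insert k (S ∩ Finset.range k) := by
          ext x
          simp only [Finset.mem_inter, Finset.mem_range, Finset.mem_insert,
            Nat.lt_succ_iff_lt_or_eq]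
          constructor
          · rintro ⟨hxS, hx | rfl⟩
            · exact Or.inr ⟨hxS, hx⟩
            · exact Or.inl rfl
          · rintro (rfl | ⟨hxS, hx⟩)
            · exact ⟨hkS, Or.inr rfl⟩
            · exact ⟨hxS, Or.inl hx⟩
        have hcard' : (S ∩ Finset.range (k + 1)).card = (S ∩ Finset.range k).card + 1 := by
          rw [hT', Finset.card_insert_of_notMem (by simp)]
        rw [hcard']
        have hexp : k + 1 - ((S ∩ Finset.range k).card + 1) = k - (S ∩ Finset.range k).card := by
          omega
        rw [hexp]
        calc σ₀ * γ₂ ^ ((S ∩ Finset.range k).card + 1) * γ₁ ^ (k - (S ∩ Finset.range k).card)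
            = γ₂ * (σ₀ * γ₂ ^ (S ∩ Finset.range k).card *
              γ₁ ^ (k - (S ∩ Finset.range k).card)) := by ring
          _ ≤ γ₂ * σ k := by
              exact mul_le_mul_of_nonneg_left ihk (le_of_lt hγ₂0)
          _ ≤ σ (k + 1) := hsucc k hkm hkS
      · have hT' : S ∩ Finset.range (k + 1) = S ∩ Finset.range k := by
          ext x
          simp only [Finset.mem_inter, Finset.mem_range, Nat.lt_succ_iff_lt_or_eq]
          constructor
          · rintro ⟨hxS, hx | rfl⟩
            · exact ⟨hxS, hx⟩
            · exact absurd hxS hkS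
          · rintro ⟨hxS, hx⟩
            exact ⟨hxS, Or.inl hx⟩
        rw [hT']
        have hexp : k + 1 - (S ∩ Finset.range k).card = (k - (S ∩ Finset.range k).card) + 1 := by
          omega
        rw [hexp]
        calc σ₀ * γ₂ ^ (S ∩ Finset.range k).card * γ₁ ^ ((k - (S ∩ Finset.range k).card) + 1)
            = γ₁ * (σ₀ * γ₂ ^ (S ∩ Finset.range k).card *
              γ₁ ^ (k - (S ∩ Finset.range k).card)) := by ring
          _ ≤ γ₁ * σ k := mul_le_mul_of_nonneg_left ihk (le_of_lt hγ₁0)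
          _ ≤ σ (k + 1) := hfail k hkm hkS
  have hSm : S ∩ Finset.range m = S := Finset.inter_eq_left.mpr hS
  set c := S.card with hc
  have hcm : c ≤ m := by
    simpa using Finset.card_le_card hS
  have hkey := key m le_rfl
  rw [hSm] at hkey
  have hσmax : σ₀ ≤ σmax := by
    have := hmax 0 (Nat.zero_le m)
    rwa [hσ0] at this
  have hσmax0 : 0 < σmax := lt_of_lt_of_le hσ₀ hσmax
  have hchain : σ₀ * γ₂ ^ c * γ₁ ^ (m - c) ≤ σmax :=
    le_trans hkey (hmax m le_rfl)
  have hlog : Real.log σ₀ + c * Real.log γ₂ + ((m : ℝ) - c) * Real.log γ₁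
      ≤ Real.log σmax := by
    have hl := Real.log_le_log (by positivity) hchain
    rw [Real.log_mul (by positivity) (by positivity),
      Real.log_mul (ne_of_gt hσ₀) (by positivity),
      Real.log_pow, Real.log_pow] at hl
    have hcast : ((m - c : ℕ) : ℝ) = (m : ℝ) - c := by
      rw [Nat.cast_sub hcm]
    rw [hcast] at hl
    linarith
  have habs : |Real.log γ₂| = -Real.log γ₂ := abs_of_neg hlγ₂
  rw [habs, Real.log_div (ne_of_gt hσmax0) (ne_of_gt hσ₀)]
  set a := Real.log γ₁
  set b := Real.log γ₂
  set L := Real.log σmax - Real.log σ₀ with hL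
  have h2 : (m : ℝ) - c ≤ (L - c * b) / a := by
    rw [le_div_iff₀ hlγ₁]
    linarith
  have heq : (c : ℝ) * (1 + (-b) / a) + (1 / a) * (Real.log σmax - Real.log σ₀)
      = c + (L - c * b) / a := by
    field_simp
    ring
  linarith [h2, heq]
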